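/- Let γ be a density matrix (positive trace-class operator with trace 1) on a Hilbert space H^(k) and p^(k) a rank-one orthogonal projector on H^(k). Then the trace-norm distance satisfies tr |p^(k) − γ| = 2 ‖p^(k) − γ‖, where ‖·‖ denotes the operator norm. -/

import Mathlib

open ComplexOrder
open Matrix in

/-- Seiringer's identity: for a density matrix `γ` and a rank-one orthogonal projector
`p = |φ⟩⟨φ|`, the trace norm of `p − γ` (the sum of the absolute values of its
eigenvalues) equals twice its operator norm. -/
theorem stmt_1 (n : ℕ) (γ p : Matrix (Fin n) (Fin n) ℂ)
    (hγ : γ.PosSemidef) (htr : γ.trace = 1)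
    (φ : Fin n → ℂ) (hφ : ∑ i, Complex.normSq (φ i) = 1)
    (hp : p = Matrix.of fun i j => φ i * (starRingEnd ℂ) (φ j))
    (hA : (p - γ).IsHermitian) :
    ∑ i, |hA.eigenvalues i| = 2 * ‖Matrix.toEuclideanCLM (𝕜 := ℂ) (p - γ)‖ := by
  classical
  set A : Matrix (Fin n) (Fin n) ℂ := p - γ with hAdef
  set μ : Fin n → ℝ := hA.eigenvalues with hμ
  set b := hA.eigenvectorBasis with hb
  set T := Matrix.toEuclideanCLM (𝕜 := ℂ) A with hT
  -- the trace of A is zero, hence the eigenvalues sum to zero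
  have htrA : A.trace = 0 := by
    have htrp : p.trace = 1 := by
      rw [hp]
      have : ∀ i : Fin n, (Matrix.of fun i j => φ i * (starRingEnd ℂ) (φ j)).diag i
          = (Complex.normSq (φ i) : ℂ) := by
        intro i
        simp [Matrix.diag, Complex.mul_conj]
      rw [Matrix.trace, Finset.sum_congr rfl (fun i _ => this i)]
      rw [← Complex.ofReal_sum, hφ, Complex.ofReal_one]
    rw [hAdef, Matrix.trace_sub, htrp, htr, sub_self]
  have htrsum : A.trace = ∑ i, (μ i : ℂ) := by
    calc A.trace = ((hA.eigenvectorUnitary : Matrix (Fin n) (Fin n) ℂ) *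
          Matrix.diagonal (RCLike.ofReal ∘ μ) *
          (star (hA.eigenvectorUnitary : Matrix (Fin n) (Fin n) ℂ))).trace := by
          conv_lhs => rw [hA.spectral_theorem, Unitary.conjStarAlgAut_apply]
      _ = ((star (hA.eigenvectorUnitary : Matrix (Fin n) (Fin n) ℂ)) *
          (hA.eigenvectorUnitary : Matrix (Fin n) (Fin n) ℂ) *
          Matrix.diagonal (RCLike.ofReal ∘ μ)).trace := by
          rw [Matrix.trace_mul_cycle]
      _ = ∑ i, (μ i : ℂ) := by
          rw [Unitary.coe_star_mul_self, one_mul, Matrix.trace_diagonal]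
          rfl
  have hsum : ∑ i, μ i = 0 := by
    have : ((∑ i, μ i : ℝ) : ℂ) = 0 := by
      rw [Complex.ofReal_sum, ← htrsum, htrA]
    exact_mod_cast this
  -- the quadratic form of p
  have hquadp : ∀ x : Fin n → ℂ, dotProduct (star x) (p *ᵥ x)
      = (starRingEnd ℂ) (∑ k, (starRingEnd ℂ) (φ k) * x k)
        * (∑ k, (starRingEnd ℂ) (φ k) * x k) := by
    intro x
    rw [hp]
    simp only [dotProduct, Matrix.mulVec, Matrix.of_apply, Pi.star_apply, RCLike.star_def]
    rw [map_sum, Finset.sum_mul]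
    congr 1; ext i
    rw [Finset.mul_sum, Finset.mul_sum]
    congr 1; ext j
    simp only [_root_.map_mul, Complex.conj_conj]; ring
  -- the quadratic form of A is nonpositive on the orthogonal complement of φ
  have hneg : ∀ x : Fin n → ℂ, (∑ k, (starRingEnd ℂ) (φ k) * x k) = 0 →
      (dotProduct (star x) (A *ᵥ x)).re ≤ 0 := by
    intro x hx
    rw [hAdef, Matrix.sub_mulVec, dotProduct_sub, hquadp, hx, mul_zero, zero_sub]
    have h := hγ.dotProduct_mulVec_nonneg x
    rw [Complex.le_def] at h
    simp only [Complex.neg_re]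
    simp at h
    linarith [h.1]
  -- eigenvector facts
  have heig : ∀ i, A *ᵥ ⇑(b i) = μ i • ⇑(b i) := fun i => hA.mulVec_eigenvectorBasis i
  have hon : ∀ i j, dotProduct (star ⇑(b i)) ⇑(b j) = if i = j then (1:ℂ) else 0 := by
    intro i j
    have h := b.orthonormal
    rw [orthonormal_iff_ite] at h
    have := h i j
    simpa [PiLp.inner_apply, RCLike.inner_apply, dotProduct, mul_comm] using this
  -- at most one positive eigenvalue
  have hpos : ∀ i j, i ≠ j → 0 < μ i → 0 < μ j → False := by
    intro i j hij hi hj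
    set v : Fin n → ℂ := ⇑(b i) with hv
    set w : Fin n → ℂ := ⇑(b j) with hw
    set cv : ℂ := ∑ k, (starRingEnd ℂ) (φ k) * v k with hcv
    set cw : ℂ := ∑ k, (starRingEnd ℂ) (φ k) * w k with hcw
    have key : ∀ a c : ℂ, a * cv + c * cw = 0 → ¬(a = 0 ∧ c = 0) → False := by
      intro a c hac hne
      set x : Fin n → ℂ := a • v + c • w with hx
      have hcx : (∑ k, (starRingEnd ℂ) (φ k) * x k) = 0 := by
        rw [hx]
        simp only [Pi.add_apply, Pi.smul_apply, smul_eq_mul]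
        rw [← hac, hcv, hcw, Finset.mul_sum, Finset.mul_sum, ← Finset.sum_add_distrib]
        congr 1; ext k; ring
      have hval : dotProduct (star x) (A *ᵥ x)
          = ((Complex.normSq a * μ i + Complex.normSq c * μ j : ℝ) : ℂ) := by
        have hvv := hon i i; have hww := hon j j
        have hvw := hon i j; have hwv := hon j i
        rw [if_pos rfl] at hvv hww
        rw [if_neg hij] at hvw
        rw [if_neg (Ne.symm hij)] at hwv
        rw [hx]
        simp only [hv, hw, Matrix.mulVec_add, Matrix.mulVec_smul, heig i, heig j, star_add, star_smul,
          add_dotProduct, dotProduct_add, smul_dotProduct,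
          dotProduct_smul, hvv, hww, hvw, hwv, smul_smul, smul_zero, smul_eq_mul, mul_one,
          RCLike.star_def]
        push_cast
        rw [← Complex.mul_conj, ← Complex.mul_conj]
        push_cast [Complex.real_smul]
        ring
      have h1 := hneg x hcx
      rw [hval] at h1
      simp only [Complex.ofReal_re] at h1
      have ha : 0 < Complex.normSq a ∨ 0 < Complex.normSq c := by
        rcases not_and_or.1 hne with h | h
        · exact Or.inl (Complex.normSq_pos.2 h)
        · exact Or.inr (Complex.normSq_pos.2 h)
      rcases ha with h | h
      · nlinarith [Complex.normSq_nonneg c]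
      · nlinarith [Complex.normSq_nonneg a]
    by_cases hcv0 : cv = 0
    · exact key 1 0 (by rw [hcv0]; ring) (by simp)
    · exact key cw (-cv) (by ring) (by simp [hcv0])
  -- operator norm facts
  have heigT : ∀ i, T (b i) = (μ i : ℂ) • b i := by
    intro i
    apply (WithLp.equiv 2 _).injective
    rw [hT]
    change ((Matrix.toEuclideanCLM (𝕜 := ℂ) A) (b i)).ofLp = ((μ i : ℂ) • b i).ofLp
    rw [Matrix.ofLp_toEuclideanCLM]
    ext j
    have := congrFun (heig i) j
    simpa [Matrix.toLin'_apply, Complex.real_smul] using this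
  have hTlower : ∀ i, |μ i| ≤ ‖T‖ := by
    intro i
    have h1 : ‖T (b i)‖ = |μ i| := by
      rw [heigT i, norm_smul, b.orthonormal.1 i]
      simp [Complex.norm_real]
    calc |μ i| = ‖T (b i)‖ := h1.symm
      _ ≤ ‖T‖ * ‖b i‖ := T.le_opNorm _
      _ = ‖T‖ := by rw [b.orthonormal.1 i, mul_one]
  have hTupper : ∀ S : ℝ, 0 ≤ S → (∀ i, |μ i| ≤ S) → ‖T‖ ≤ S := by
    intro S hS habs
    have hsa : _root_.IsSelfAdjoint T := by
      rw [_root_.IsSelfAdjoint, hT, ← map_star]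
      exact congrArg _ hA
    apply ContinuousLinearMap.opNorm_le_bound _ hS
    intro x
    have hrepr : ∀ i, b.repr (T x) i = (μ i : ℂ) * b.repr x i := by
      intro i
      rw [b.repr_apply_apply, b.repr_apply_apply]
      calc inner ℂ (b i) (T x) = inner ℂ (T (b i)) x := by
            rw [← ContinuousLinearMap.adjoint_inner_left, hsa.adjoint_eq]
        _ = (μ i : ℂ) * inner ℂ (b i) x := by
            rw [heigT, inner_smul_left]
            simp
    have h1 : ‖T x‖ ^ 2 ≤ (S * ‖x‖) ^ 2 := by
      rw [← b.repr.norm_map (T x), ← b.repr.norm_map x]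
      rw [EuclideanSpace.norm_eq, EuclideanSpace.norm_eq]
      rw [Real.sq_sqrt (by positivity), mul_pow, Real.sq_sqrt (by positivity), Finset.mul_sum]
      apply Finset.sum_le_sum
      intro i _
      rw [hrepr]
      have h2 : ‖(μ i : ℂ)‖ ≤ S := by
        rw [Complex.norm_real]; exact habs i
      calc ‖(μ i : ℂ) * b.repr x i‖ ^ 2
          = ‖(μ i : ℂ)‖^2 * ‖b.repr x i‖ ^ 2 := by rw [norm_mul]; ring
        _ ≤ S^2 * ‖b.repr x i‖ ^ 2 := by
            apply mul_le_mul_of_nonneg_right _ (by positivity)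
            exact pow_le_pow_left₀ (norm_nonneg _) h2 2
    nlinarith [norm_nonneg (T x), norm_nonneg x, mul_nonneg hS (norm_nonneg x)]
  -- set S := sum of positive parts
  set S : ℝ := ∑ i, max (μ i) 0 with hSdef
  have hsumabs : ∑ i, |μ i| = 2 * S := by
    have : ∀ i : Fin n, |μ i| = 2 * max (μ i) 0 - μ i := by
      intro i
      rcases le_or_gt (μ i) 0 with h | h
      · rw [max_eq_right h, abs_of_nonpos h]; ring
      · rw [max_eq_left h.le, abs_of_pos h]; ring
    rw [Finset.sum_congr rfl (fun i _ => this i), Finset.sum_sub_distrib, hsum,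
      ← Finset.mul_sum]
    ring
  -- S equals the operator norm
  have hSnorm : S = ‖T‖ := by
    by_cases hex : ∃ i, 0 < μ i
    · obtain ⟨i₀, hi₀⟩ := hex
      have hothers : ∀ j, j ≠ i₀ → μ j ≤ 0 := by
        intro j hj
        by_contra h
        push_neg at h
        exact hpos j i₀ hj h hi₀
      have hSval : S = μ i₀ := by
        rw [hSdef]
        rw [Finset.sum_eq_single_of_mem i₀ (Finset.mem_univ _)]
        · exact max_eq_left hi₀.le
        · intro j _ hj
          exact max_eq_right (hothers j hj)
      have hpair : ∀ i, i ≠ i₀ → 0 ≤ μ i + μ i₀ := by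
        intro i hi
        have hsub : ({i, i₀} : Finset (Fin n)) ⊆ Finset.univ := Finset.subset_univ _
        have h2 : ∑ j ∈ ({i, i₀} : Finset (Fin n)), (-μ) j ≤ ∑ j, (-μ) j := by
          apply Finset.sum_le_sum_of_subset_of_nonneg hsub
          intro j _ hj
          simp only [Finset.mem_insert, Finset.mem_singleton, not_or] at hj
          simp only [Pi.neg_apply, Left.nonneg_neg_iff]
          exact hothers j hj.2
        rw [Finset.sum_pair hi] at h2
        simp only [Pi.neg_apply, Finset.sum_neg_distrib, hsum, neg_zero] at h2
        linarith
      have habs : ∀ i, |μ i| ≤ S := by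
        intro i
        rw [hSval]
        rcases eq_or_ne i i₀ with rfl | hi
        · exact le_of_eq (abs_of_pos hi₀)
        · have h1 := hothers i hi
          have h2 := hpair i hi
          rw [abs_le]
          constructor <;> linarith
      have h1 : S ≤ ‖T‖ := by
        rw [hSval]
        calc μ i₀ ≤ |μ i₀| := le_abs_self _
          _ ≤ ‖T‖ := hTlower i₀
      have h2 : ‖T‖ ≤ S := hTupper S (by rw [hSval]; exact hi₀.le) habs
      linarith
    · push_neg at hex
      have hzero : ∀ i, μ i = 0 := by
        intro i
        have := (Finset.sum_eq_zero_iff_of_nonpos (fun j _ => hex j)).1 hsum i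
          (Finset.mem_univ _)
        exact this
      have hS0 : S = 0 := by
        rw [hSdef]
        apply Finset.sum_eq_zero
        intro i _
        rw [hzero i, max_self]
      rw [hS0]
      have h1 : ‖T‖ ≤ 0 := hTupper 0 le_rfl (fun i => by rw [hzero i]; simp)
      linarith [norm_nonneg T]
  rw [hsumabs, hSnorm, hT, hAdef]
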